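/- Let n ≥ 1 and consider equal group sizes n_x = n_y = n, with real data x = (x_1,...,x_n) and y = (y_1,...,y_n) having sample means x̄ and ȳ. Fix m with 0 ≤ m ≤ n, let π be uniform on Π(m), and let x̄*, ȳ* be the group sample means of the permuted dataset corresponding to π. Then for the difference statistic R = x̄* − ȳ*, one has E[R] = (x̄ − ȳ)(1 − 2m/n). In particular, if n is even, the expectation is 0 when m = n/2, and its magnitude equals |x̄ − ȳ| when m = 0 or m = n. -/

import Mathlib

open Finset

/-- Distance between a permutation and the observed ordering: the number of the
first `nx` indices that `π` maps outside the first `nx` positions. -/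
def pdist (nx ny : ℕ) (π : Equiv.Perm (Fin (nx + ny))) : ℕ :=
  nx - (Finset.univ.filter (fun i : Fin nx => ((π (Fin.castAdd ny i)) : ℕ) < nx)).card

/-- The partition `Π(m)`: the set of permutations at distance `m`. -/
def PartM (nx ny m : ℕ) : Finset (Equiv.Perm (Fin (nx + ny))) :=
  Finset.univ.filter (fun π => pdist nx ny π = m)

/-- Expectation of `f` under the uniform distribution on a finite set `s`. -/
noncomputable def uexp {α : Type*} (s : Finset α) (f : α → ℝ) : ℝ :=
  (∑ a ∈ s, f a) / s.card

/-- Variance of `f` under the uniform distribution on a finite set `s`. -/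
noncomputable def fvar {α : Type*} (s : Finset α) (f : α → ℝ) : ℝ :=
  uexp s (fun a => (f a - uexp s f) ^ 2)

/-- Covariance of `f` and `g` under the uniform distribution on a finite set `s`. -/
noncomputable def fcov {α : Type*} (s : Finset α) (f g : α → ℝ) : ℝ :=
  uexp s (fun a => (f a - uexp s f) * (g a - uexp s g))

/-- Indicator that observation `i` of group x is exchanged out of group x under `π`. -/
def deltaX (nx ny : ℕ) (π : Equiv.Perm (Fin (nx + ny))) (i : Fin nx) : ℝ :=
  if nx ≤ ((π (Fin.castAdd ny i)) : ℕ) then 1 else 0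

/-- Indicator that observation `j` of group y is exchanged into group x under `π`. -/
def deltaY (nx ny : ℕ) (π : Equiv.Perm (Fin (nx + ny))) (j : Fin ny) : ℝ :=
  if ((π (Fin.natAdd nx j)) : ℕ) < nx then 1 else 0

/-- Sum of the x-observations exchanged out of group x. -/
noncomputable def Wx (nx ny : ℕ) (x : Fin nx → ℝ) (π : Equiv.Perm (Fin (nx + ny))) : ℝ :=
  ∑ i : Fin nx, deltaX nx ny π i * x i

/-- Sum of the y-observations exchanged into group x. -/
noncomputable def Wy (nx ny : ℕ) (y : Fin ny → ℝ) (π : Equiv.Perm (Fin (nx + ny))) : ℝ :=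
  ∑ j : Fin ny, deltaY nx ny π j * y j

/-- Mean of the first `nx` entries of the permuted dataset `z*` (where `z*_{π i} = z i`). -/
noncomputable def xstar (nx ny : ℕ) (z : Fin (nx + ny) → ℝ) (π : Equiv.Perm (Fin (nx + ny))) : ℝ :=
  (∑ i : Fin nx, z (π.symm (Fin.castAdd ny i))) / nx

/-- Mean of the last `ny` entries of the permuted dataset `z*` (where `z*_{π i} = z i`). -/
noncomputable def ystar (nx ny : ℕ) (z : Fin (nx + ny) → ℝ) (π : Equiv.Perm (Fin (nx + ny))) : ℝ :=
  (∑ j : Fin ny, z (π.symm (Fin.natAdd nx j))) / ny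

/-- `W(π) = W_y(π) - W_x(π)` computed from the pooled data `z`. -/
noncomputable def WZ (nx ny : ℕ) (z : Fin (nx + ny) → ℝ) (π : Equiv.Perm (Fin (nx + ny))) : ℝ :=
  (∑ j : Fin ny, deltaY nx ny π j * z (Fin.natAdd nx j))
    - (∑ i : Fin nx, deltaX nx ny π i * z (Fin.castAdd ny i))

lemma card_filter_pi (n m : ℕ) (hm : m ≤ n) (π : Equiv.Perm (Fin (n+n)))
    (hπ : π ∈ PartM n n m) :
    (univ.filter (fun i : Fin n => ((π (Fin.castAdd n i)) : ℕ) < n)).card = n - m := by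
  simp only [PartM, mem_filter, mem_univ, true_and] at hπ
  unfold pdist at hπ
  have h := Finset.card_filter_le (univ : Finset (Fin n))
    (fun i => ((π (Fin.castAdd n i)) : ℕ) < n)
  simp only [Finset.card_univ, Fintype.card_fin] at h
  omega

lemma sum_deltaX_pt (n m : ℕ) (hm : m ≤ n) (π : Equiv.Perm (Fin (n+n)))
    (hπ : π ∈ PartM n n m) :
    ∑ i : Fin n, deltaX n n π i = (m : ℝ) := by
  have hc := card_filter_pi n m hm π hπ
  simp only [deltaX]
  rw [Finset.sum_boole]
  have hsplit := Finset.card_filter_add_card_filter_not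
    (s := (univ : Finset (Fin n))) (p := fun i => ((π (Fin.castAdd n i)) : ℕ) < n)
  simp only [not_lt, Finset.card_univ, Fintype.card_fin] at hsplit
  have : (univ.filter (fun i : Fin n => n ≤ ((π (Fin.castAdd n i)) : ℕ))).card = m := by omega
  rw [this]

lemma sum_indicator_perm (n : ℕ) (π : Equiv.Perm (Fin (n+n))) :
    ∑ p : Fin (n+n), (if ((π p : ℕ)) < n then (1:ℝ) else 0) = n := by
  have h := Equiv.sum_comp π (fun q : Fin (n+n) => if ((q : ℕ)) < n then (1:ℝ) else 0)
  rw [h, Fin.sum_univ_add]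
  simp

lemma sum_deltaY_pt (n m : ℕ) (hm : m ≤ n) (π : Equiv.Perm (Fin (n+n)))
    (hπ : π ∈ PartM n n m) :
    ∑ j : Fin n, deltaY n n π j = (m : ℝ) := by
  have h := sum_indicator_perm n π
  rw [Fin.sum_univ_add] at h
  have h1 : ∑ i : Fin n, (if ((π (Fin.castAdd n i) : ℕ)) < n then (1:ℝ) else 0)
      = ((n - m : ℕ) : ℝ) := by
    rw [Finset.sum_boole, card_filter_pi n m hm π hπ]
  rw [h1] at h
  simp only [deltaY]
  push_cast [hm] at h ⊢
  linarith

lemma xstar_num (n : ℕ) (z : Fin (n+n) → ℝ) (π : Equiv.Perm (Fin (n+n))) :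
    ∑ i : Fin n, z (π.symm (Fin.castAdd n i))
      = ∑ i : Fin n, z (Fin.castAdd n i)
        + ((∑ j : Fin n, deltaY n n π j * z (Fin.natAdd n j))
            - ∑ i : Fin n, deltaX n n π i * z (Fin.castAdd n i)) := by
  have key : ∑ p : Fin (n+n), (if ((π p : ℕ)) < n then z p else 0)
      = ∑ i : Fin n, z (π.symm (Fin.castAdd n i)) := by
    have h := Equiv.sum_comp π (fun q : Fin (n+n) => if ((q : ℕ)) < n then z (π.symm q) else 0)
    simp only [Equiv.symm_apply_apply] at h
    rw [h, Fin.sum_univ_add]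
    simp
  rw [← key, Fin.sum_univ_add]
  have e1 : ∀ i : Fin n, (if ((π (Fin.castAdd n i) : ℕ)) < n then z (Fin.castAdd n i) else 0)
      = z (Fin.castAdd n i) - deltaX n n π i * z (Fin.castAdd n i) := by
    intro i; simp only [deltaX]
    rcases lt_or_ge ((π (Fin.castAdd n i) : ℕ)) n with h | h
    · rw [if_pos h, if_neg (by omega)]; ring
    · rw [if_neg (by omega), if_pos h]; ring
  have e2 : ∀ j : Fin n, (if ((π (Fin.natAdd n j) : ℕ)) < n then z (Fin.natAdd n j) else 0)
      = deltaY n n π j * z (Fin.natAdd n j) := by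
    intro j; simp only [deltaY]; split_ifs <;> ring
  rw [Finset.sum_congr rfl (fun i _ => e1 i), Finset.sum_congr rfl (fun j _ => e2 j),
    Finset.sum_sub_distrib]
  ring

lemma ystar_num (n : ℕ) (z : Fin (n+n) → ℝ) (π : Equiv.Perm (Fin (n+n))) :
    ∑ j : Fin n, z (π.symm (Fin.natAdd n j))
      = ∑ j : Fin n, z (Fin.natAdd n j)
        - ((∑ j : Fin n, deltaY n n π j * z (Fin.natAdd n j))
            - ∑ i : Fin n, deltaX n n π i * z (Fin.castAdd n i)) := by
  have htot : ∑ i : Fin n, z (π.symm (Fin.castAdd n i))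
      + ∑ j : Fin n, z (π.symm (Fin.natAdd n j))
      = ∑ i : Fin n, z (Fin.castAdd n i) + ∑ j : Fin n, z (Fin.natAdd n j) := by
    have h := Equiv.sum_comp π.symm z
    rw [Fin.sum_univ_add] at h
    rw [h, Fin.sum_univ_add]
  have hx := xstar_num n z π
  linarith

lemma card_filter_comp_perm {α : Type*} [Fintype α] [DecidableEq α] (σ : Equiv.Perm α)
    (P : α → Prop) [DecidablePred P] :
    (univ.filter fun a => P (σ a)).card = (univ.filter P).card := by
  apply Finset.card_bij (fun a _ => σ a)
  · intro a ha; simp only [mem_filter, mem_univ, true_and] at ha ⊢; exact ha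
  · intro a _ b _ h; exact σ.injective h
  · intro b hb
    refine ⟨σ.symm b, ?_, by simp⟩
    simp only [mem_filter, mem_univ, true_and] at hb ⊢
    simpa using hb

lemma castAdd_ne_natAdd (n : ℕ) (i : Fin n) (j : Fin n) :
    Fin.castAdd n i ≠ Fin.natAdd n j := by
  intro h
  have := congrArg (Fin.val) h
  simp at this
  omega

lemma pdist_mul_swap_cast (n : ℕ) (π : Equiv.Perm (Fin (n+n))) (i i' : Fin n) :
    pdist n n (π * Equiv.swap (Fin.castAdd n i) (Fin.castAdd n i')) = pdist n n π := by
  unfold pdist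
  congr 1
  have hkey : ∀ k : Fin n,
      (π * Equiv.swap (Fin.castAdd n i) (Fin.castAdd n i')) (Fin.castAdd n k)
      = π (Fin.castAdd n ((Equiv.swap i i') k)) := by
    intro k
    simp only [Equiv.Perm.mul_apply]
    congr 1
    rcases eq_or_ne k i with rfl | hki
    · simp [Equiv.swap_apply_left]
    · rcases eq_or_ne k i' with rfl | hki'
      · simp [Equiv.swap_apply_right]
      · rw [Equiv.swap_apply_of_ne_of_ne
            (fun h => hki (Fin.castAdd_injective n n h))
            (fun h => hki' (Fin.castAdd_injective n n h)),
          Equiv.swap_apply_of_ne_of_ne hki hki']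
  calc (univ.filter fun k : Fin n =>
        (((π * Equiv.swap (Fin.castAdd n i) (Fin.castAdd n i')) (Fin.castAdd n k) : ℕ)) < n).card
      = (univ.filter fun k : Fin n =>
          ((π (Fin.castAdd n ((Equiv.swap i i') k)) : ℕ)) < n).card := by
        apply congrArg
        apply Finset.filter_congr
        intro k _
        simp [hkey k]
    _ = (univ.filter fun k : Fin n => ((π (Fin.castAdd n k) : ℕ)) < n).card :=
        card_filter_comp_perm (Equiv.swap i i') (fun k => ((π (Fin.castAdd n k) : ℕ)) < n)

lemma pdist_mul_swap_nat (n : ℕ) (π : Equiv.Perm (Fin (n+n))) (j j' : Fin n) :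
    pdist n n (π * Equiv.swap (Fin.natAdd n j) (Fin.natAdd n j')) = pdist n n π := by
  unfold pdist
  congr 1
  apply congrArg
  apply Finset.filter_congr
  intro k _
  simp only [Equiv.Perm.mul_apply]
  rw [Equiv.swap_apply_of_ne_of_ne (castAdd_ne_natAdd n k j) (castAdd_ne_natAdd n k j')]

lemma mem_PartM_mul_swap_cast (n m : ℕ) (π : Equiv.Perm (Fin (n+n))) (i i' : Fin n) :
    π ∈ PartM n n m ↔ π * Equiv.swap (Fin.castAdd n i) (Fin.castAdd n i') ∈ PartM n n m := by
  simp only [PartM, mem_filter, mem_univ, true_and, pdist_mul_swap_cast]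

lemma mem_PartM_mul_swap_nat (n m : ℕ) (π : Equiv.Perm (Fin (n+n))) (j j' : Fin n) :
    π ∈ PartM n n m ↔ π * Equiv.swap (Fin.natAdd n j) (Fin.natAdd n j') ∈ PartM n n m := by
  simp only [PartM, mem_filter, mem_univ, true_and, pdist_mul_swap_nat]

lemma sum_deltaX_const (n m : ℕ) (i i' : Fin n) :
    ∑ π ∈ PartM n n m, deltaX n n π i = ∑ π ∈ PartM n n m, deltaX n n π i' := by
  apply Finset.sum_equiv (Equiv.mulRight (Equiv.swap (Fin.castAdd n i) (Fin.castAdd n i')))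
  · intro π
    simpa using mem_PartM_mul_swap_cast n m π i i'
  · intro π _
    simp only [Equiv.coe_mulRight, deltaX, Equiv.Perm.mul_apply, Equiv.swap_apply_right]

lemma sum_deltaY_const (n m : ℕ) (j j' : Fin n) :
    ∑ π ∈ PartM n n m, deltaY n n π j = ∑ π ∈ PartM n n m, deltaY n n π j' := by
  apply Finset.sum_equiv (Equiv.mulRight (Equiv.swap (Fin.natAdd n j) (Fin.natAdd n j')))
  · intro π
    simpa using mem_PartM_mul_swap_nat n m π j j'
  · intro π _
    simp only [Equiv.coe_mulRight, deltaY, Equiv.Perm.mul_apply, Equiv.swap_apply_right]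

lemma sum_deltaX_eq (n m : ℕ) (hn : 1 ≤ n) (hm : m ≤ n) (i : Fin n) :
    ∑ π ∈ PartM n n m, deltaX n n π i
      = (m : ℝ) * ((PartM n n m).card : ℝ) / n := by
  have htot : ∑ i' : Fin n, ∑ π ∈ PartM n n m, deltaX n n π i'
      = (m : ℝ) * ((PartM n n m).card : ℝ) := by
    rw [Finset.sum_comm]
    rw [Finset.sum_congr rfl (fun π hπ => sum_deltaX_pt n m hm π hπ)]
    rw [Finset.sum_const, nsmul_eq_mul]
    ring
  rw [Finset.sum_congr rfl (fun i' _ => sum_deltaX_const n m i' i)] at htot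
  rw [Finset.sum_const, nsmul_eq_mul, Finset.card_univ, Fintype.card_fin] at htot
  have hn0 : (n : ℝ) ≠ 0 := by positivity
  field_simp
  linarith [htot]

lemma sum_deltaY_eq (n m : ℕ) (hn : 1 ≤ n) (hm : m ≤ n) (j : Fin n) :
    ∑ π ∈ PartM n n m, deltaY n n π j
      = (m : ℝ) * ((PartM n n m).card : ℝ) / n := by
  have htot : ∑ j' : Fin n, ∑ π ∈ PartM n n m, deltaY n n π j'
      = (m : ℝ) * ((PartM n n m).card : ℝ) := by
    rw [Finset.sum_comm]
    rw [Finset.sum_congr rfl (fun π hπ => sum_deltaY_pt n m hm π hπ)]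
    rw [Finset.sum_const, nsmul_eq_mul]
    ring
  rw [Finset.sum_congr rfl (fun j' _ => sum_deltaY_const n m j' j)] at htot
  rw [Finset.sum_const, nsmul_eq_mul, Finset.card_univ, Fintype.card_fin] at htot
  have hn0 : (n : ℝ) ≠ 0 := by positivity
  field_simp
  linarith [htot]

def swapFun (n m : ℕ) (p : Fin (n+n)) : Fin (n+n) :=
  if _h : (p:ℕ) < m ∧ (p:ℕ) < n then ⟨(p:ℕ) + n, by omega⟩
  else if _h2 : n ≤ (p:ℕ) ∧ (p:ℕ) < n + m then ⟨(p:ℕ) - n, by have := p.isLt; omega⟩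
  else p

lemma swapFun_val (n m : ℕ) (p : Fin (n+n)) :
    ((swapFun n m p : Fin (n+n)) : ℕ)
      = if (p:ℕ) < m ∧ (p:ℕ) < n then (p:ℕ) + n
        else if n ≤ (p:ℕ) ∧ (p:ℕ) < n + m then (p:ℕ) - n else (p:ℕ) := by
  unfold swapFun
  split_ifs <;> rfl

lemma swapFun_invol (n m : ℕ) (hm : m ≤ n) : Function.Involutive (swapFun n m) := by
  intro p
  have hp := p.isLt
  apply Fin.ext
  rw [swapFun_val, swapFun_val]
  split_ifs <;> omega

noncomputable def piM (n m : ℕ) (hm : m ≤ n) : Equiv.Perm (Fin (n+n)) :=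
  (swapFun_invol n m hm).toPerm

lemma card_filter_lt_fin (n m : ℕ) (hm : m ≤ n) :
    (univ.filter fun i : Fin n => (i:ℕ) < m).card = m := by
  rw [← Finset.card_range m]
  apply Finset.card_bij (fun (i : Fin n) _ => (i : ℕ))
  · intro a ha; simp only [mem_filter, mem_univ, true_and] at ha; simpa using ha
  · intro a _ b _ h; exact Fin.val_injective h
  · intro b hb
    simp only [Finset.mem_range] at hb
    exact ⟨⟨b, by omega⟩, by simp [hb], rfl⟩

lemma PartM_nonempty (n m : ℕ) (hm : m ≤ n) : (PartM n n m).Nonempty := by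
  refine ⟨piM n m hm, ?_⟩
  simp only [PartM, mem_filter, mem_univ, true_and]
  unfold pdist
  have hval : ∀ i : Fin n, (((piM n m hm) (Fin.castAdd n i) : ℕ) < n) ↔ ¬ ((i:ℕ) < m) := by
    intro i
    have hi := i.isLt
    simp only [piM, Function.Involutive.coe_toPerm, swapFun_val, Fin.coe_castAdd]
    split_ifs <;> omega
  rw [Finset.filter_congr (fun i _ => by rw [hval i])]
  have : (univ.filter fun i : Fin n => ¬ ((i:ℕ) < m)).card = n - m := by
    have hsplit := Finset.card_filter_add_card_filter_not
      (s := (univ : Finset (Fin n))) (p := fun i : Fin n => (i:ℕ) < m)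
    rw [card_filter_lt_fin n m hm] at hsplit
    simp only [Finset.card_univ, Fintype.card_fin] at hsplit
    omega
  rw [this]
  omega

lemma main_eq (n : ℕ) (hn : 1 ≤ n) (x y : Fin n → ℝ) (m : ℕ) (hm : m ≤ n) :
    uexp (PartM n n m)
        (fun π => xstar n n (Fin.append x y) π - ystar n n (Fin.append x y) π)
      = ((∑ i, x i) / n - (∑ j, y j) / n) * (1 - 2 * (m : ℝ) / n) := by
  have hn0 : (n:ℝ) ≠ 0 := by
    exact Nat.cast_ne_zero.mpr (by omega)
  have hne := PartM_nonempty n m hm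
  have hcard : ((PartM n n m).card : ℝ) ≠ 0 := by
    exact_mod_cast (Finset.card_pos.mpr hne).ne'
  set s := PartM n n m with hs
  set z := Fin.append x y with hz
  have hzx : ∀ i : Fin n, z (Fin.castAdd n i) = x i := fun i => Fin.append_left x y i
  have hzy : ∀ j : Fin n, z (Fin.natAdd n j) = y j := fun j => Fin.append_right x y j
  have hA : ∑ i : Fin n, z (Fin.castAdd n i) = ∑ i, x i :=
    Finset.sum_congr rfl (fun i _ => hzx i)
  have hB : ∑ j : Fin n, z (Fin.natAdd n j) = ∑ j, y j :=
    Finset.sum_congr rfl (fun j _ => hzy j)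
  have hpt : ∀ π : Equiv.Perm (Fin (n+n)),
      xstar n n z π - ystar n n z π
        = ((∑ i, x i) - (∑ j, y j) + 2 * WZ n n z π) / n := by
    intro π
    unfold xstar ystar
    rw [xstar_num n z π, ystar_num n z π, hA, hB, div_sub_div_same]
    unfold WZ
    ring
  have hWZsum : ∑ π ∈ s, WZ n n z π
      = (m:ℝ) * (s.card : ℝ) / n * ((∑ j, y j) - (∑ i, x i)) := by
    unfold WZ
    rw [Finset.sum_sub_distrib]
    have h1 : ∑ π ∈ s, ∑ j : Fin n, deltaY n n π j * z (Fin.natAdd n j)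
        = (m:ℝ) * (s.card : ℝ) / n * ∑ j, y j := by
      rw [Finset.sum_comm]
      have hterm : ∀ j : Fin n, ∑ π ∈ s, deltaY n n π j * z (Fin.natAdd n j)
          = ((m:ℝ) * (s.card : ℝ) / n) * y j := by
        intro j
        rw [← Finset.sum_mul, sum_deltaY_eq n m hn hm j, hzy j]
      rw [Finset.sum_congr rfl (fun j _ => hterm j), ← Finset.mul_sum]
    have h2 : ∑ π ∈ s, ∑ i : Fin n, deltaX n n π i * z (Fin.castAdd n i)
        = (m:ℝ) * (s.card : ℝ) / n * ∑ i, x i := by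
      rw [Finset.sum_comm]
      have hterm : ∀ i : Fin n, ∑ π ∈ s, deltaX n n π i * z (Fin.castAdd n i)
          = ((m:ℝ) * (s.card : ℝ) / n) * x i := by
        intro i
        rw [← Finset.sum_mul, sum_deltaX_eq n m hn hm i, hzx i]
      rw [Finset.sum_congr rfl (fun i _ => hterm i), ← Finset.mul_sum]
    rw [h1, h2]
    ring
  unfold uexp
  rw [Finset.sum_congr rfl (fun π _ => hpt π)]
  rw [← Finset.sum_div, Finset.sum_add_distrib, Finset.sum_const, nsmul_eq_mul,
    ← Finset.mul_sum, hWZsum]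
  field_simp
  ring

/-- for equal group sizes `nx = ny = n`, under the uniform distribution
on `Π(m)`, `E[x̄* - ȳ*] = (x̄ - ȳ)(1 - 2m/n)`; in particular it is `0` when `2m = n`
and has magnitude `|x̄ - ȳ|` when `m = 0` or `m = n`. -/
theorem diff_mean_trend (n : ℕ) (hn : 1 ≤ n) (x y : Fin n → ℝ)
    (m : ℕ) (hm : m ≤ n) :
    uexp (PartM n n m)
        (fun π => xstar n n (Fin.append x y) π - ystar n n (Fin.append x y) π)
      = ((∑ i, x i) / n - (∑ j, y j) / n) * (1 - 2 * (m : ℝ) / n)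
    ∧ (2 * m = n →
        uexp (PartM n n m)
            (fun π => xstar n n (Fin.append x y) π - ystar n n (Fin.append x y) π) = 0)
    ∧ (m = 0 ∨ m = n →
        |uexp (PartM n n m)
            (fun π => xstar n n (Fin.append x y) π - ystar n n (Fin.append x y) π)|
          = |(∑ i, x i) / n - (∑ j, y j) / n|) := by
  have hn0 : (n:ℝ) ≠ 0 := by
    exact Nat.cast_ne_zero.mpr (by omega)
  have h1 := main_eq n hn x y m hm
  refine ⟨h1, ?_, ?_⟩
  · intro h2m
    rw [h1]
    have : (2 : ℝ) * (m : ℝ) = (n : ℝ) := by exact_mod_cast h2m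
    rw [this, div_self hn0]
    ring
  · rintro (rfl | rfl)
    · rw [h1]
      norm_num
    · rw [h1, mul_div_assoc, div_self hn0]
      rw [show (1 : ℝ) - 2 * 1 = -1 by ring]
      rw [mul_neg_one, abs_neg]
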